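/- Let G be a finite graph and let X, Y ⊆ V(G). Suppose that X is α-cut-linked in G for some α > 0, and suppose that there exists a collection 𝒬 of pairwise vertex-disjoint paths in G, each with one endpoint in X and the other endpoint in Y, with |𝒬| = |Y|. Then Y is min{1/2, α/2}-cut-linked in G. -/

import Mathlib

/-- Number of edges of `G` crossing the cut `(A, Aᶜ)`. -/
noncomputable def cutSize {V : Type*} (G : SimpleGraph V) (A : Set V) : ℕ :=
  {e : Sym2 V | e ∈ G.edgeSet ∧ ∃ u ∈ A, ∃ v ∈ Aᶜ, e = s(u, v)}.ncard

/-- `X` is `α`-cut-linked in `G`. -/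
def CutLinked {V : Type*} (G : SimpleGraph V) (α : ℝ) (X : Set V) : Prop :=
  ∀ A : Set V,
    α * (min ((A ∩ X).ncard) ((Aᶜ ∩ X).ncard) : ℕ) ≤ (cutSize G A : ℝ)

/-- A walk from a vertex in `A` to a vertex outside `A` contains a crossing edge. -/
private lemma walk_cross {V : Type*} (G : SimpleGraph V) (A : Set V) :
    ∀ {u v : V} (w : G.Walk u v), u ∈ A → v ∉ A →
    ∃ x y, x ∈ A ∧ y ∉ A ∧ s(x, y) ∈ w.edges := by
  intro u v w
  induction w with
  | nil => intro hu hv; exact absurd hu hv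
  | @cons u x v h q ih =>
    intro hu hv
    by_cases hx : x ∈ A
    · obtain ⟨x', y', hx', hy', hm⟩ := ih hx hv
      exact ⟨x', y', hx', hy', List.mem_cons_of_mem _ hm⟩
    · exact ⟨u, x, hu, hx, List.mem_cons_self⟩

/-- If `X` is `α`-cut-linked in `G` and there is a collection of `|Y|` pairwise
vertex-disjoint paths in `G`, each with one endpoint in `X` and the other in `Y`,
then `Y` is `min(1/2, α/2)`-cut-linked in `G`. -/
theorem stmt7 {V : Type*} [Fintype V] (G : SimpleGraph V) (X Y : Set V)
    (α : ℝ) (hα : 0 < α) (hX : CutLinked G α X)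
    (hpaths : ∃ (a b : Fin (Y.ncard) → V) (p : ∀ j, G.Walk (a j) (b j)),
      (∀ j, a j ∈ X) ∧ (∀ j, b j ∈ Y) ∧ (∀ j, (p j).IsPath) ∧
      (∀ j k, j ≠ k → List.Disjoint (p j).support (p k).support)) :
    CutLinked G (min (1 / 2) (α / 2)) Y := by
  classical
  obtain ⟨a, b, p, haX, hbY, _hpath, hdisj⟩ := hpaths
  intro A
  -- injectivity of the endpoint maps
  have hbinj : Function.Injective b := by
    intro j k h
    by_contra hne
    refine hdisj j k hne (p j).end_mem_support ?_
    rw [h]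
    exact (p k).end_mem_support
  have hainj : Function.Injective a := by
    intro j k h
    by_contra hne
    refine hdisj j k hne (p j).start_mem_support ?_
    rw [h]
    exact (p k).start_mem_support
  -- the range of b is exactly Y
  have hrange : Set.range b = Y := by
    apply Set.eq_of_subset_of_ncard_le (Set.range_subset_iff.mpr hbY)
    rw [← Set.image_univ, Set.ncard_image_of_injective _ hbinj, Set.ncard_univ,
      Nat.card_eq_fintype_card, Fintype.card_fin]
  set C : Set (Sym2 V) := {e | e ∈ G.edgeSet ∧ ∃ u ∈ A, ∃ v ∈ Aᶜ, e = s(u, v)} with hC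
  have hCfin : C.Finite := Set.toFinite C
  set Cross : Set (Fin Y.ncard) := {j | ¬ (a j ∈ A ↔ b j ∈ A)} with hCrossDef
  -- each crossing path contributes a crossing edge
  have hedge : ∀ j, ∃ e, j ∈ Cross → e ∈ C ∧ e ∈ (p j).edges := by
    intro j
    by_cases hj : j ∈ Cross
    · by_cases haj : a j ∈ A
      · have hbj : b j ∉ A := fun hb => hj (iff_of_true haj hb)
        obtain ⟨x, y, hx, hy, hm⟩ := walk_cross G A (p j) haj hbj
        exact ⟨s(x, y), fun _ => ⟨⟨(p j).edges_subset_edgeSet hm, x, hx, y, hy, rfl⟩, hm⟩⟩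
      · have hbj : b j ∈ A := by
          by_contra hb
          exact hj (iff_of_false haj hb)
        obtain ⟨x, y, hx, hy, hm⟩ := walk_cross G A (p j).reverse hbj haj
        have hm' : s(x, y) ∈ (p j).edges := by
          rwa [SimpleGraph.Walk.edges_reverse, List.mem_reverse] at hm
        exact ⟨s(x, y), fun _ => ⟨⟨(p j).edges_subset_edgeSet hm', x, hx, y, hy, rfl⟩, hm'⟩⟩
    · exact ⟨s(a j, a j), fun h => absurd h hj⟩
  choose f hf using hedge
  have hinjOn : Set.InjOn f Cross := by
    intro j hj k hk hfe
    by_contra hne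
    obtain ⟨_, h2j⟩ := hf j hj
    obtain ⟨_, h2k⟩ := hf k hk
    obtain ⟨x, y, hxy⟩ : ∃ x y, f j = s(x, y) :=
      Sym2.ind (fun x y => ⟨x, y, rfl⟩) (f j)
    have hxj : x ∈ (p j).support :=
      (p j).fst_mem_support_of_mem_edges (hxy ▸ h2j)
    have hxk : x ∈ (p k).support :=
      (p k).fst_mem_support_of_mem_edges ((hfe ▸ hxy : f k = s(x, y)) ▸ h2k)
    exact hdisj j k hne hxj hxk
  have hCrossC : Cross.ncard ≤ C.ncard := by
    calc Cross.ncard = (f '' Cross).ncard := (Set.ncard_image_of_injOn hinjOn).symm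
      _ ≤ C.ncard := Set.ncard_le_ncard
          (by rintro e ⟨j, hj, rfl⟩; exact (hf j hj).1) hCfin
  -- key counting inequality
  have key : ∀ S : Set V, ({j | ¬ (a j ∈ S ↔ b j ∈ S)} ⊆ Cross) →
      (S ∩ Y).ncard ≤ (S ∩ X).ncard + Cross.ncard := by
    intro S hS
    have h1 : (S ∩ Y) = b '' {j | b j ∈ S} := by
      ext v
      constructor
      · rintro ⟨hvS, hvY⟩
        rw [← hrange] at hvY
        obtain ⟨j, rfl⟩ := hvY
        exact ⟨j, hvS, rfl⟩
      · rintro ⟨j, hj, rfl⟩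
        exact ⟨hj, hbY j⟩
    have h2 : {j | b j ∈ S} ⊆ {j | a j ∈ S ∧ b j ∈ S} ∪ Cross := by
      intro j hj
      by_cases h : a j ∈ S
      · exact Or.inl ⟨h, hj⟩
      · exact Or.inr (hS (by simp only [Set.mem_setOf_eq]; tauto))
    have h3 : a '' {j | a j ∈ S ∧ b j ∈ S} ⊆ S ∩ X := by
      rintro v ⟨j, ⟨hj1, _⟩, rfl⟩; exact ⟨hj1, haX j⟩
    have h4 : {j | a j ∈ S ∧ b j ∈ S}.ncard ≤ (S ∩ X).ncard := by
      have := Set.ncard_le_ncard h3 (S ∩ X).toFinite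
      rwa [Set.ncard_image_of_injective _ hainj] at this
    calc (S ∩ Y).ncard = {j | b j ∈ S}.ncard := by
          rw [h1, Set.ncard_image_of_injective _ hbinj]
      _ ≤ ({j | a j ∈ S ∧ b j ∈ S} ∪ Cross).ncard :=
          Set.ncard_le_ncard h2 (Set.toFinite _)
      _ ≤ {j | a j ∈ S ∧ b j ∈ S}.ncard + Cross.ncard := Set.ncard_union_le _ _
      _ ≤ (S ∩ X).ncard + Cross.ncard := by omega
  have hA := key A (fun j hj => hj)
  have hAc := key Aᶜ (by
    intro j hj
    simp only [Set.mem_setOf_eq, Set.mem_compl_iff] at hj ⊢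
    tauto)
  have hcut : C.ncard = cutSize G A := rfl
  have hm : min ((A ∩ Y).ncard) ((Aᶜ ∩ Y).ncard) ≤
      min ((A ∩ X).ncard) ((Aᶜ ∩ X).ncard) + cutSize G A := by
    omega
  -- final arithmetic
  set c := cutSize G A with hc
  set mY := min ((A ∩ Y).ncard) ((Aᶜ ∩ Y).ncard) with hmY
  set mX := min ((A ∩ X).ncard) ((Aᶜ ∩ X).ncard) with hmX
  have h1 : (mY : ℝ) ≤ (mX : ℝ) + (c : ℝ) := by exact_mod_cast hm
  have h2 : α * (mX : ℝ) ≤ (c : ℝ) := hX A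
  have hminpos : (0 : ℝ) ≤ min (1 / 2) (α / 2) :=
    le_min (by norm_num) (by linarith)
  have t1 : min (1 / 2) (α / 2) * (mY : ℝ) ≤ min (1 / 2) (α / 2) * ((mX : ℝ) + (c : ℝ)) :=
    mul_le_mul_of_nonneg_left h1 hminpos
  have t2 : min (1 / 2) (α / 2) * ((mX : ℝ) + (c : ℝ)) ≤ (α / 2) * (mX : ℝ) + (1 / 2) * (c : ℝ) := by
    rw [mul_add]
    gcongr <;>
      first
        | exact Nat.cast_nonneg _
        | exact min_le_left _ _
        | exact min_le_right _ _
  linarith
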